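/- Every finite nonabelian group of odd order admits an abelian partition. -/
import Mathlib


/-- An abelian partition of a group `G`: a family of `n` pairwise disjoint sets covering `G`,
each of size at least 2 and consisting of pairwise commuting elements. -/
def IsAbelianPartition {G : Type*} [Group G] {n : ℕ} (A : Fin n → Set G) : Prop :=
  (∀ i, 2 ≤ (A i).ncard) ∧ (⋃ i, A i) = Set.univ ∧
    Pairwise (Function.onFun Disjoint A) ∧
    ∀ i, ∀ x ∈ A i, ∀ y ∈ A i, x * y = y * x

/-- The minimal number of parts in an abelian partition of `G` (0 if none exists). -/
noncomputable def apDegree (G : Type*) [Group G] : ℕ :=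
  sInf {n | ∃ A : Fin n → Set G, IsAbelianPartition A}

/-- The maximal size of a noncommuting subset of `G`. -/
noncomputable def maxNoncommuting (G : Type*) [Group G] : ℕ :=
  sSup {k | ∃ S : Set G, S.ncard = k ∧ ∀ x ∈ S, ∀ y ∈ S, x ≠ y → x * y ≠ y * x}

open Classical in
/-- The class of `a`: the triple `{1, x, x⁻¹}` if `a` is in it, else the pair `{a, a⁻¹}`. -/
noncomputable def partC {G : Type*} [Group G] (x : G) (a : G) : Set G :=
  if a ∈ ({1, x, x⁻¹} : Set G) then {1, x, x⁻¹} else {a, a⁻¹}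

lemma mem_triple_inv {G : Type*} [Group G] (x c : G) :
    c⁻¹ ∈ ({1, x, x⁻¹} : Set G) ↔ c ∈ ({1, x, x⁻¹} : Set G) := by
  simp only [Set.mem_insert_iff, Set.mem_singleton_iff, inv_eq_one]
  constructor
  · rintro (h | h | h)
    · exact Or.inl h
    · exact Or.inr (Or.inr (by rw [← h, inv_inv]))
    · exact Or.inr (Or.inl (inv_injective h))
  · rintro (h | h | h)
    · exact Or.inl h
    · exact Or.inr (Or.inr (by rw [h]))
    · exact Or.inr (Or.inl (by rw [h, inv_inv]))

lemma mem_partC_self {G : Type*} [Group G] (x a : G) : a ∈ partC x a := by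
  unfold partC
  split
  · assumption
  · left; rfl

lemma partC_eq_of_mem {G : Type*} [Group G] (x a b : G) (h : b ∈ partC x a) :
    partC x b = partC x a := by
  classical
  unfold partC at h ⊢
  by_cases hT : a ∈ ({1, x, x⁻¹} : Set G)
  · rw [if_pos hT] at h ⊢
    rw [if_pos h]
  · rw [if_neg hT] at h ⊢
    rcases h with rfl | rfl
    · rw [if_neg hT]
    · have hbT : a⁻¹ ∉ ({1, x, x⁻¹} : Set G) := fun hc => hT ((mem_triple_inv x a).mp hc)
      rw [if_neg hbT, inv_inv, Set.pair_comm]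

/-- The setoid whose classes are the `partC` sets. -/
noncomputable def partSetoid {G : Type*} [Group G] (x : G) : Setoid G where
  r a b := b ∈ partC x a
  iseqv := by
    constructor
    · exact fun a => mem_partC_self x a
    · intro a b h
      rw [partC_eq_of_mem x a b h]; exact mem_partC_self x a
    · intro a b c hab hbc
      rw [← partC_eq_of_mem x a b hab]; exact hbc

theorem odd_order_nonabelian_is_AP
    {G : Type*} [Group G] [Finite G]
    (hna : ∃ x y : G, x * y ≠ y * x)
    (hodd : Odd (Nat.card G)) :
    ∃ (n : ℕ) (A : Fin n → Set G), IsAbelianPartition A := by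
  classical
  obtain ⟨x, y, hxy⟩ := hna
  have hx1 : x ≠ 1 := by rintro rfl; simp at hxy
  -- no element of order 2
  have hinv : ∀ a : G, a ≠ 1 → a⁻¹ ≠ a := by
    intro a ha h
    have h2 : a ^ 2 = 1 := by
      rw [pow_two]
      nth_rewrite 1 [← h]
      exact inv_mul_cancel a
    have hd : orderOf a ∣ 2 := orderOf_dvd_of_pow_eq_one h2
    rcases (Nat.dvd_prime Nat.prime_two).mp hd with h1 | h1
    · exact ha (orderOf_eq_one_iff.mp h1)
    · have hd' : (2 : ℕ) ∣ Nat.card G := h1 ▸ orderOf_dvd_natCard a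
      exact (Nat.not_even_iff_odd.mpr hodd) ((even_iff_two_dvd).mpr hd')
  set s := partSetoid x with hs
  haveI : Finite (Quotient s) := Quotient.finite s
  set n := Nat.card (Quotient s) with hn
  let e : Quotient s ≃ Fin n := Finite.equivFin (Quotient s)
  refine ⟨n, fun i => partC x (Quotient.out (e.symm i)), ?_, ?_, ?_, ?_⟩
  · -- size ≥ 2
    intro i
    show 2 ≤ (partC x (Quotient.out (e.symm i))).ncard
    set a := Quotient.out (e.symm i) with ha
    unfold partC
    by_cases hT : a ∈ ({1, x, x⁻¹} : Set G)
    · rw [if_pos hT]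
      calc 2 = ({1, x} : Set G).ncard := (Set.ncard_pair (Ne.symm hx1)).symm
        _ ≤ _ := Set.ncard_le_ncard
            (by intro c hc
                rcases hc with rfl | hc
                · left; rfl
                · right; left; exact hc) (Set.toFinite _)
    · rw [if_neg hT]
      have ha1 : a ≠ 1 := fun h => hT (by rw [h]; left; rfl)
      rw [Set.ncard_pair (Ne.symm (hinv a ha1))]
  · -- covers
    ext g
    simp only [Set.mem_iUnion, Set.mem_univ, iff_true]
    refine ⟨e (Quotient.mk s g), ?_⟩
    show g ∈ partC x (Quotient.out (e.symm (e (Quotient.mk s g))))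
    rw [Equiv.symm_apply_apply]
    exact Quotient.exact (Quotient.out_eq (Quotient.mk s g))
  · -- disjoint
    intro i j hij
    rw [Function.onFun, Set.disjoint_left]
    intro g hgi hgj
    apply hij
    have h1 : partC x g = partC x (Quotient.out (e.symm i)) := partC_eq_of_mem _ _ _ hgi
    have h2 : partC x g = partC x (Quotient.out (e.symm j)) := partC_eq_of_mem _ _ _ hgj
    have hr : s.r (Quotient.out (e.symm i)) (Quotient.out (e.symm j)) := by
      show Quotient.out (e.symm j) ∈ partC x (Quotient.out (e.symm i))
      rw [← h1, h2]
      exact mem_partC_self _ _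
    have hq : e.symm i = e.symm j := by
      rw [← Quotient.out_eq (e.symm i), ← Quotient.out_eq (e.symm j)]
      exact Quotient.sound hr
    exact e.symm.injective hq
  · -- commuting
    intro i a ha b hb
    have ha' : a ∈ partC x (Quotient.out (e.symm i)) := ha
    have hb' : b ∈ partC x (Quotient.out (e.symm i)) := hb
    clear ha hb
    unfold partC at ha' hb'
    by_cases hT : Quotient.out (e.symm i) ∈ ({1, x, x⁻¹} : Set G)
    · rw [if_pos hT] at ha' hb'
      simp only [Set.mem_insert_iff, Set.mem_singleton_iff] at ha' hb'
      rcases ha' with rfl | rfl | rfl <;> rcases hb' with rfl | rfl | rfl <;> group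
    · rw [if_neg hT] at ha' hb'
      simp only [Set.mem_insert_iff, Set.mem_singleton_iff] at ha' hb'
      rcases ha' with rfl | rfl <;> rcases hb' with rfl | rfl <;> group
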